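/- arXiv:1106.3598 — 4 statements merged into one kernel-verified Lean document; each statement's English description precedes it below -/
import Mathlib

section
/- If f : G → A is conjugation-invariant and satisfies f(βγ) = f(β) + f(γ) whenever βγ lies in a fixed normal subgroup R, and f vanishes on a set S of elements of R whose conjugates generate R, then f vanishes on all of R. -/
theorem stmt_7 {G A : Type*} [Group G] [AddCommGroup A]
    (R : Subgroup G) [R.Normal] (S : Set G) (hS : S ⊆ (R : Set G))
    (hgen : Subgroup.normalClosure S = R)
    (f : G → A)
    (hconj : ∀ β γ : G, f (γ⁻¹ * β * γ) = f β)
    (hadd : ∀ β γ : G, β * γ ∈ R → f (β * γ) = f β + f γ)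
    (hone : f 1 = 0)
    (hinv : ∀ β ∈ R, f β⁻¹ = - f β)
    (hvanish : ∀ s ∈ S, f s = 0) :
    ∀ r ∈ R, f r = 0 := by
  have key : ∀ x ∈ Subgroup.closure (Group.conjugatesOfSet S), f x = 0 ∧ x ∈ R := by
    intro x hx
    induction hx using Subgroup.closure_induction with
    | mem x hx =>
      rw [Group.mem_conjugatesOfSet_iff] at hx
      obtain ⟨s, hs, hc⟩ := hx
      obtain ⟨g, rfl⟩ := isConj_iff.mp hc
      constructor
      · rw [show g * s * g⁻¹ = (g⁻¹)⁻¹ * s * g⁻¹ by group, hconj, hvanish s hs]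
      · exact Subgroup.Normal.conj_mem ‹R.Normal› s (hS hs) g
    | one => exact ⟨hone, R.one_mem⟩
    | mul x y hx hy fx fy =>
      refine ⟨?_, R.mul_mem fx.2 fy.2⟩
      rw [hadd x y (R.mul_mem fx.2 fy.2), fx.1, fy.1, add_zero]
    | inv x hx fx =>
      exact ⟨by rw [hinv x fx.2, fx.1, neg_zero], R.inv_mem fx.2⟩
  intro r hr
  rw [← hgen] at hr
  exact (key r hr).1
end

section
/- Let R be a commutative ring and t ∈ R. The n×n lower-triangular matrix Ω_n with 1's on the diagonal and all entries below the diagonal equal to 1−t satisfies ᵀΣ̄_i Ω_n Σ_i = Ω_n for each reduced Burau matrix Σ_i (1 ≤ i ≤ n−1), where the bar denotes the substitution t ↦ t⁻¹ (assuming t invertible) and Σ_i is the identity except for the 2×2 block (rows/columns i, i+1) equal to [[1−t, 1],[t, 0]]. -/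
open Matrix

/-- The (unreduced) Burau matrix of the generator `σ_{i+1}` of `B_n` (0-indexed
block at rows/columns `i, i+1`), evaluated at `s`. -/
def burauMat (R : Type*) [CommRing R] (s : R) (n i : ℕ) : Matrix (Fin n) (Fin n) R :=
  Matrix.of fun j k =>
    if (j : ℕ) = i ∧ (k : ℕ) = i then 1 - s
    else if (j : ℕ) = i ∧ (k : ℕ) = i + 1 then 1
    else if (j : ℕ) = i + 1 ∧ (k : ℕ) = i then s
    else if (j : ℕ) = i + 1 ∧ (k : ℕ) = i + 1 then 0
    else if j = k then 1 else 0

/-- The lower-triangular matrix `Ω_n` with `1`'s on the diagonal and all entries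
below the diagonal equal to `1 - s`. -/
def omegaMat (R : Type*) [CommRing R] (s : R) (n : ℕ) : Matrix (Fin n) (Fin n) R :=
  Matrix.of fun j k => if j = k then 1 else if k < j then 1 - s else 0

section Aux

variable {R : Type*} [CommRing R] {n : ℕ}

private lemma mul_vmv (M : Matrix (Fin n) (Fin n) R) (u w : Fin n → R) :
    M * vecMulVec u w = vecMulVec (M *ᵥ u) w := by
  ext j k
  simp [Matrix.mul_apply, vecMulVec_apply, Matrix.mulVec, dotProduct, Finset.sum_mul, mul_assoc]

private lemma vmv_mul (M : Matrix (Fin n) (Fin n) R) (u w : Fin n → R) :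
    vecMulVec u w * M = vecMulVec u (w ᵥ* M) := by
  ext j k
  simp [Matrix.mul_apply, vecMulVec_apply, Matrix.vecMul, dotProduct, Finset.mul_sum, mul_assoc]

private lemma vmv_vmv (a b c d : Fin n → R) :
    vecMulVec a b * vecMulVec c d = (b ⬝ᵥ c) • vecMulVec a d := by
  ext j k
  simp only [Matrix.mul_apply, vecMulVec_apply, Matrix.smul_apply, smul_eq_mul, dotProduct,
    Finset.sum_mul]
  exact Finset.sum_congr rfl fun p _ => by ring

private lemma vmv_transpose (u w : Fin n → R) :
    (vecMulVec u w)ᵀ = vecMulVec w u := by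
  ext j k; simp [vecMulVec_apply, mul_comm]

private lemma smul_vmv (c : R) (a b : Fin n → R) :
    vecMulVec (c • a) b = c • vecMulVec a b := by
  ext j k; simp [vecMulVec_apply, mul_assoc]

private lemma vmv_neg (a b : Fin n → R) :
    vecMulVec a (-b) = -vecMulVec a b := by
  ext j k; simp [vecMulVec_apply]

private lemma burau_decomp (s : R) {i : ℕ} (hi : i + 1 < n) :
    burauMat R s n i =
      1 + vecMulVec
        (Pi.single (⟨i, Nat.lt_of_succ_lt hi⟩ : Fin n) 1 - Pi.single (⟨i + 1, hi⟩ : Fin n) 1)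
        (Pi.single (⟨i, Nat.lt_of_succ_lt hi⟩ : Fin n) (-s) + Pi.single (⟨i + 1, hi⟩ : Fin n) 1) := by
  ext j k
  obtain ⟨j, hj⟩ := j
  obtain ⟨k, hk⟩ := k
  simp only [burauMat, Matrix.of_apply, Matrix.add_apply, Matrix.one_apply, vecMulVec_apply,
    Pi.sub_apply, Pi.add_apply, Pi.single_apply, Fin.ext_iff, Fin.mk.injEq]
  split_ifs <;> first | ring1 | (exfalso; omega)

private lemma omega_mulVec (t : Rˣ) {i : ℕ} (hi : i + 1 < n) :
    omegaMat R (t : R) n *ᵥ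
        (Pi.single (⟨i, Nat.lt_of_succ_lt hi⟩ : Fin n) 1 - Pi.single (⟨i + 1, hi⟩ : Fin n) 1)
      = (-(t : R)) • (Pi.single (⟨i, Nat.lt_of_succ_lt hi⟩ : Fin n) (-((t⁻¹ : Rˣ) : R))
          + Pi.single (⟨i + 1, hi⟩ : Fin n) 1) := by
  have ht : (t : R) * ((t⁻¹ : Rˣ) : R) = 1 := by exact_mod_cast t.mul_inv
  funext j
  obtain ⟨j, hj⟩ := j
  simp only [Matrix.mulVec_sub, Matrix.mulVec_single, omegaMat, Matrix.of_apply,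
    Pi.sub_apply, Pi.smul_apply, Pi.add_apply, Pi.single_apply, smul_eq_mul, mul_one,
    Fin.ext_iff, Fin.lt_def, Fin.mk.injEq, Matrix.col_apply, MulOpposite.op_one, one_smul]
  split_ifs <;> first | ring1 | linear_combination ht | linear_combination -ht | (exfalso; omega)

private lemma vecMul_omega (t : Rˣ) {i : ℕ} (hi : i + 1 < n) :
    (Pi.single (⟨i, Nat.lt_of_succ_lt hi⟩ : Fin n) 1 - Pi.single (⟨i + 1, hi⟩ : Fin n) 1)
        ᵥ* omegaMat R (t : R) n
      = -(Pi.single (⟨i, Nat.lt_of_succ_lt hi⟩ : Fin n) (-(t : R))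
          + Pi.single (⟨i + 1, hi⟩ : Fin n) 1) := by
  funext k
  obtain ⟨k, hk⟩ := k
  simp only [Matrix.sub_vecMul, Matrix.single_vecMul, omegaMat, Matrix.of_apply,
    Pi.sub_apply, Pi.neg_apply, Pi.add_apply, Pi.single_apply, one_mul,
    Fin.ext_iff, Fin.lt_def, Fin.mk.injEq, Pi.smul_apply, Matrix.row_apply, one_smul]
  split_ifs <;> first | ring1 | (exfalso; omega)

private lemma dot_wu (t : Rˣ) {i : ℕ} (hi : i + 1 < n) :
    (Pi.single (⟨i, Nat.lt_of_succ_lt hi⟩ : Fin n) (-(t : R)) + Pi.single (⟨i + 1, hi⟩ : Fin n) 1)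
        ⬝ᵥ (Pi.single (⟨i, Nat.lt_of_succ_lt hi⟩ : Fin n) 1 - Pi.single (⟨i + 1, hi⟩ : Fin n) 1)
      = -(t : R) - 1 := by
  have h01 : (⟨i, Nat.lt_of_succ_lt hi⟩ : Fin n) ≠ ⟨i + 1, hi⟩ := by simp [Fin.ext_iff]
  simp [add_dotProduct, single_dotProduct, Pi.sub_apply, Pi.single_apply, h01, h01.symm]
  try ring

end Aux

private lemma key_assembly {R : Type*} [CommRing R] {n : ℕ}
    (Ω : Matrix (Fin n) (Fin n) R) (u w w' : Fin n → R) (c : R)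
    (h1 : Ω *ᵥ u = (-c) • w') (h2 : u ᵥ* Ω = -w) (h3 : w ⬝ᵥ u = -c - 1) :
    (1 + vecMulVec u w')ᵀ * Ω * (1 + vecMulVec u w) = Ω := by
  rw [Matrix.transpose_add, Matrix.transpose_one, vmv_transpose]
  have expand : (1 + vecMulVec w' u) * Ω * (1 + vecMulVec u w)
      = Ω + Ω * vecMulVec u w + vecMulVec w' u * Ω
        + vecMulVec w' u * Ω * vecMulVec u w := by noncomm_ring
  rw [expand, mul_vmv, h1, smul_vmv, vmv_mul, h2, vmv_neg, neg_mul, vmv_vmv, h3]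
  have : (-c) • vecMulVec w' w + -vecMulVec w' w + -((-c - 1) • vecMulVec w' w) = 0 := by
    rw [neg_smul, sub_smul, neg_smul, one_smul]
    abel
  rw [add_assoc, add_assoc, ← add_assoc ((-c) • vecMulVec w' w), this, add_zero]

/-- `ᵀΣ̄_i · Ω_n · Σ_i = Ω_n`, where the bar is `t ↦ t⁻¹`. -/
theorem stmt_8 (R : Type*) [CommRing R] (t : Rˣ) (n i : ℕ) (hi : i + 1 < n) :
    (burauMat R ((t⁻¹ : Rˣ) : R) n i)ᵀ * omegaMat R (t : R) n * burauMat R (t : R) n i =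
      omegaMat R (t : R) n := by
  rw [burau_decomp ((t⁻¹ : Rˣ) : R) hi, burau_decomp (t : R) hi]
  exact key_assembly _ _ _ _ (t : R) (omega_mulVec t hi) (vecMul_omega t hi) (dot_wu t hi)
end

section
/- Any class in Q(t)^σ-fixed-field^× modulo norms from Q(t)^× (where σ(t)=t⁻¹ and the norm is x ↦ x·σ(x)) can be represented by a fraction D(t)/t^d where D is a palindromic polynomial of degree 2d not divisible by t (i.e., t^{2d} D(1/t) = D(t)). -/
open Polynomial

private lemma stmt15_const_fix (σ : RatFunc ℚ ≃+* RatFunc ℚ) (a : ℚ) :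
    σ (algebraMap ℚ (RatFunc ℚ) a) = algebraMap ℚ (RatFunc ℚ) a := by
  have h1 := eq_ratCast ((σ : RatFunc ℚ →+* RatFunc ℚ).comp (algebraMap ℚ (RatFunc ℚ))) a
  have h2 := eq_ratCast (algebraMap ℚ (RatFunc ℚ)) a
  simpa [h2] using h1

private lemma stmt15_algebraMap_eq :
    (algebraMap (Polynomial ℚ) (RatFunc ℚ)) =
      Polynomial.eval₂RingHom (algebraMap ℚ (RatFunc ℚ)) RatFunc.X := by
  apply Polynomial.ringHom_ext
  · intro a
    rw [IsScalarTower.algebraMap_eq ℚ (Polynomial ℚ) (RatFunc ℚ)]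
    simp
  · simp [RatFunc.algebraMap_X]

private lemma stmt15_key (σ : RatFunc ℚ ≃+* RatFunc ℚ)
    (hσX : σ RatFunc.X = (RatFunc.X)⁻¹) (hσinv : ∀ x, σ (σ x) = x)
    (p : Polynomial ℚ) :
    σ (algebraMap (Polynomial ℚ) (RatFunc ℚ) p) * RatFunc.X ^ p.natDegree =
      algebraMap (Polynomial ℚ) (RatFunc ℚ) p.reverse := by
  haveI : Invertible (RatFunc.X : RatFunc ℚ) := invertibleOfNonzero RatFunc.X_ne_zero
  have hσA : ((σ : RatFunc ℚ →+* RatFunc ℚ).comp (algebraMap (Polynomial ℚ) (RatFunc ℚ))) =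
      Polynomial.eval₂RingHom (algebraMap ℚ (RatFunc ℚ)) (RatFunc.X)⁻¹ := by
    apply Polynomial.ringHom_ext
    · intro a
      have : algebraMap (Polynomial ℚ) (RatFunc ℚ) (Polynomial.C a) =
          algebraMap ℚ (RatFunc ℚ) a := by
        rw [← Polynomial.aeval_C (R := ℚ) (x := (RatFunc.X : RatFunc ℚ)) a]
        simp [Polynomial.aeval_C]
      simp [RingHom.comp_apply, this, stmt15_const_fix σ a]
    · simpa [RatFunc.algebraMap_X] using hσX
  have h1 : σ (algebraMap (Polynomial ℚ) (RatFunc ℚ) p.reverse) *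
      RatFunc.X ^ p.natDegree = algebraMap (Polynomial ℚ) (RatFunc ℚ) p := by
    have := Polynomial.eval₂_reverse_mul_pow (algebraMap ℚ (RatFunc ℚ)) (RatFunc.X : RatFunc ℚ) p
    rw [invOf_eq_inv] at this
    calc σ (algebraMap (Polynomial ℚ) (RatFunc ℚ) p.reverse) * RatFunc.X ^ p.natDegree
        = Polynomial.eval₂ (algebraMap ℚ (RatFunc ℚ)) (RatFunc.X)⁻¹ p.reverse *
            RatFunc.X ^ p.natDegree := by
          rw [show σ (algebraMap (Polynomial ℚ) (RatFunc ℚ) p.reverse) =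
            ((σ : RatFunc ℚ →+* RatFunc ℚ).comp (algebraMap (Polynomial ℚ) (RatFunc ℚ)))
              p.reverse from rfl, hσA]; rfl
      _ = Polynomial.eval₂ (algebraMap ℚ (RatFunc ℚ)) RatFunc.X p := this
      _ = algebraMap (Polynomial ℚ) (RatFunc ℚ) p := by rw [stmt15_algebraMap_eq]; rfl
  have h2 := congrArg σ h1
  rw [map_mul, hσinv, map_pow, hσX, inv_pow] at h2
  have hXn : (RatFunc.X : RatFunc ℚ) ^ p.natDegree ≠ 0 := pow_ne_zero _ RatFunc.X_ne_zero
  field_simp at h2 ⊢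
  linear_combination -h2

/-- any σ-fixed class of `Q(t)^×` modulo norms is represented by
`D(t)/t^d` with `D` palindromic of degree `2d` and not divisible by `t`. -/
theorem stmt_15 (σ : RatFunc ℚ ≃+* RatFunc ℚ)
    (hσX : σ RatFunc.X = (RatFunc.X)⁻¹) (hσinv : ∀ x, σ (σ x) = x)
    (x : RatFunc ℚ) (hx : x ≠ 0) (hfix : σ x = x) :
    ∃ (D : Polynomial ℚ) (d : ℕ) (y : RatFunc ℚ), y ≠ 0 ∧
      D.coeff 0 ≠ 0 ∧ D.natDegree = 2 * d ∧ D.reverse = D ∧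
      x * (y * σ y) = algebraMap (Polynomial ℚ) (RatFunc ℚ) D / RatFunc.X ^ d := by
  set A := algebraMap (Polynomial ℚ) (RatFunc ℚ) with hA
  have hp : x.num ≠ 0 := RatFunc.num_ne_zero hx
  have hq : x.denom ≠ 0 := x.denom_ne_zero
  set E : Polynomial ℚ := x.num * x.denom.reverse with hEdef
  have hE : E ≠ 0 := mul_ne_zero hp (mt Polynomial.reverse_eq_zero.mp hq)
  obtain ⟨E₀, hfac, hndvd⟩ := E.exists_eq_pow_rootMultiplicity_mul_and_not_dvd hE 0
  rw [Polynomial.C_0, sub_zero] at hfac hndvd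
  set a := E.rootMultiplicity 0 with ha
  have hc0 : E₀.coeff 0 ≠ 0 := fun h => hndvd (Polynomial.X_dvd_iff.mpr h)
  have hE₀ : E₀ ≠ 0 := fun h => hc0 (by simp [h])
  set n := x.denom.natDegree with hn
  set m := E₀.natDegree with hm
  set y := A x.denom with hy
  have hyne : y ≠ 0 := RatFunc.algebraMap_ne_zero hq
  have hXne : (RatFunc.X : RatFunc ℚ) ≠ 0 := RatFunc.X_ne_zero
  have hx' : x * A x.denom = A x.num := by
    have h0 := RatFunc.num_div_denom x
    rw [div_eq_iff (RatFunc.algebraMap_ne_zero hq)] at h0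
    exact h0.symm
  have hkey := stmt15_key σ hσX hσinv x.denom
  have h1 : x * (y * σ y) * RatFunc.X ^ n = A E₀ * RatFunc.X ^ a := by
    calc x * (y * σ y) * RatFunc.X ^ n = (x * y) * (σ y * RatFunc.X ^ n) := by ring
      _ = A x.num * A x.denom.reverse := by rw [hx', hkey]
      _ = A E := by rw [← map_mul]
      _ = A E₀ * RatFunc.X ^ a := by
          rw [hfac, map_mul, map_pow, RatFunc.algebraMap_X]; ring
  have hkey2 := stmt15_key σ hσX hσinv E₀
  have h2 := congrArg σ h1
  simp only [map_mul, map_pow, hσX, hfix, hσinv] at h2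
  have h3 : x * (y * σ y) * RatFunc.X ^ a * RatFunc.X ^ m =
      A E₀.reverse * RatFunc.X ^ n := by
    rw [← hm] at hkey2
    have hu : (RatFunc.X : RatFunc ℚ) ^ n * (RatFunc.X)⁻¹ ^ n = 1 := by
      rw [← mul_pow, mul_inv_cancel₀ hXne, one_pow]
    have hv : (RatFunc.X : RatFunc ℚ) ^ a * (RatFunc.X)⁻¹ ^ a = 1 := by
      rw [← mul_pow, mul_inv_cancel₀ hXne, one_pow]
    linear_combination RatFunc.X ^ m * (RatFunc.X ^ n * RatFunc.X ^ a * h2 -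
      x * (y * σ y) * RatFunc.X ^ a * hu + σ (A E₀) * RatFunc.X ^ n * hv) + RatFunc.X ^ n * hkey2
  have hfield : A E₀ * RatFunc.X ^ (2 * a + m) = A E₀.reverse * RatFunc.X ^ (2 * n) := by
    linear_combination (RatFunc.X : RatFunc ℚ) ^ n * h3 -
      (RatFunc.X : RatFunc ℚ) ^ (a + m) * h1
  have hpoly : E₀ * Polynomial.X ^ (2 * a + m) = E₀.reverse * Polynomial.X ^ (2 * n) := by
    apply RatFunc.algebraMap_injective ℚ
    rw [map_mul, map_mul, map_pow, map_pow, RatFunc.algebraMap_X]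
    exact hfield
  have htd : 2 * a + m = 2 * n := by
    have := congrArg Polynomial.natTrailingDegree hpoly
    rw [Polynomial.natTrailingDegree_mul_X_pow hE₀,
      Polynomial.natTrailingDegree_mul_X_pow (mt Polynomial.reverse_eq_zero.mp hE₀),
      Polynomial.natTrailingDegree_eq_zero.mpr (Or.inr hc0),
      Polynomial.natTrailingDegree_eq_zero.mpr (Or.inr (by
        rw [Polynomial.coeff_zero_reverse]
        exact Polynomial.leadingCoeff_ne_zero.mpr hE₀))] at this
    omega
  have hrev : E₀.reverse = E₀ := by
    rw [htd] at hpoly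
    exact (mul_right_cancel₀ (pow_ne_zero _ Polynomial.X_ne_zero) hpoly).symm
  refine ⟨E₀, n - a, y, hyne, hc0, by omega, hrev, ?_⟩
  rw [eq_div_iff (pow_ne_zero _ hXne)]
  apply mul_right_cancel₀ (pow_ne_zero a hXne)
  calc x * (y * σ y) * RatFunc.X ^ (n - a) * RatFunc.X ^ a
      = x * (y * σ y) * RatFunc.X ^ (n - a + a) := by rw [pow_add]; ring
    _ = x * (y * σ y) * RatFunc.X ^ n := by congr 2; omega
    _ = A E₀ * RatFunc.X ^ a := h1
end

section
/- Uniqueness of the minimal palindromic representative: let R ∈ Q[t] be palindromic of degree 2d, coprime to t, squarefree with each irreducible factor P satisfying P̃ = cP for a scalar c. If Q ∈ Q[t] and there exist coprime F, G ∈ Q[t] and an integer k with R·G·G̃ = t^k·Q·F·F̃, then R divides Q. -/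
open Polynomial

lemma my_reflect_invol {R : Type*} [Semiring R] (N : ℕ) (f : R[X]) :
    reflect N (reflect N f) = f := by
  ext i
  simp [coeff_reflect, revAt_invol]

/-- If `P` divides `F.reverse` and `F ≠ 0`, then `P.reverse` divides `F`. -/
lemma rev_dvd {P F : Polynomial ℚ} (hF : F ≠ 0) (h : P ∣ F.reverse) :
    P.reverse ∣ F := by
  obtain ⟨S, hS⟩ := h
  by_cases hP : P = 0
  · simp [hP, reverse_eq_zero] at hS
    exact absurd hS hF
  have hS0 : S ≠ 0 := by
    rintro rfl
    simp [reverse_eq_zero] at hS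
    exact hF hS
  have hdeg : P.natDegree + S.natDegree ≤ F.natDegree := by
    have := natDegree_mul hP hS0
    rw [← this, ← hS]
    exact reverse_natDegree_le F
  have hN : F = reflect F.natDegree (P * S) := by
    rw [← hS]
    have : F.reverse = reflect F.natDegree F := rfl
    rw [this, my_reflect_invol]
  have hsplit : reflect F.natDegree (P * S)
      = reflect P.natDegree P * reflect (F.natDegree - P.natDegree) S := by
    have h1 : P.natDegree ≤ F.natDegree := le_trans (Nat.le_add_right _ _) hdeg
    have h2 : S.natDegree ≤ F.natDegree - P.natDegree := Nat.le_sub_of_add_le (by omega)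
    have := reflect_mul P S (le_refl P.natDegree) h2
    rwa [Nat.add_sub_cancel' h1] at this
  rw [hN, hsplit]
  exact Dvd.intro _ rfl

lemma sf_dvd (R : Polynomial ℚ) (hsq : Squarefree R) :
    ∀ Q : Polynomial ℚ, (∀ p : Polynomial ℚ, Prime p → p ∣ R → p ∣ Q) → R ∣ Q := by
  induction R using UniqueFactorizationMonoid.induction_on_prime with
  | h₁ => exact fun Q h => absurd hsq not_squarefree_zero
  | h₂ u hu => exact fun Q h => hu.dvd
  | h₃ a p ha hp ih =>
    intro Q h
    have hpQ : p ∣ Q := h p hp (Dvd.intro a rfl)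
    obtain ⟨Q', rfl⟩ := hpQ
    have hsa : Squarefree a := hsq.squarefree_of_dvd (Dvd.intro_left p rfl)
    have hdvd : a ∣ Q' := by
      apply ih hsa
      intro q hq hqa
      have hqQ : q ∣ p * Q' := h q hq (Dvd.dvd.mul_left hqa p)
      rcases hq.dvd_mul.mp hqQ with hqp | hqQ'
      · exfalso
        have hassoc : Associated q p := (hq.associated_of_dvd hp) hqp
        have hpa : p ∣ a := hassoc.symm.dvd.trans hqa
        exact hp.not_unit (hsq p (mul_dvd_mul_left p hpa))
      · exact hqQ'
    exact mul_dvd_mul_left p hdvd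

/-- uniqueness of the minimal palindromic representative. -/
theorem stmt_17 (R : Polynomial ℚ) (d : ℕ) (hR0 : R ≠ 0)
    (hRt : R.coeff 0 ≠ 0) (hdeg : R.natDegree = 2 * d) (hpal : R.reverse = R)
    (hsq : Squarefree R)
    (hfac : ∀ P : Polynomial ℚ, Irreducible P → P ∣ R → ∃ c : ℚ, P.reverse = c • P)
    (Q F G : Polynomial ℚ) (hFG : IsCoprime F G) (k : ℕ)
    (heq : R * G * G.reverse = Polynomial.X ^ k * (Q * F * F.reverse)) :
    R ∣ Q := by
  by_cases hQ : Q = 0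
  · simp [hQ]
  have hG : G ≠ 0 := by
    rintro rfl
    have hFu : IsUnit F := isCoprime_zero_right.mp hFG
    simp only [reverse_zero, mul_zero, zero_mul] at heq
    have := heq.symm
    rcases mul_eq_zero.mp this with h | h
    · exact pow_ne_zero k X_ne_zero h
    · rcases mul_eq_zero.mp h with h' | h'
      · rcases mul_eq_zero.mp h' with h'' | h''
        · exact hQ h''
        · exact hFu.ne_zero h''
      · exact hFu.ne_zero (reverse_eq_zero.mp h')
  have hF : F ≠ 0 := by
    rintro rfl
    simp only [reverse_zero, mul_zero, zero_mul] at heq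
    rcases mul_eq_zero.mp heq with h | h
    · rcases mul_eq_zero.mp h with h' | h'
      · exact hR0 h'
      · exact hG h'
    · exact hG (reverse_eq_zero.mp h)
  apply sf_dvd R hsq
  intro p hp hpR
  -- p does not divide X^k
  have hpX : ¬ p ∣ X ^ k := by
    intro hdvd
    have hpx : p ∣ X := hp.dvd_of_dvd_pow hdvd
    have hassoc : Associated p X := hp.associated_of_dvd prime_X hpx
    exact hRt (X_dvd_iff.mp (hassoc.symm.dvd.trans hpR))
  -- palindromic scalar for p
  obtain ⟨c, hc⟩ := hfac p hp.irreducible hpR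
  have hp0 : p ≠ 0 := hp.ne_zero
  have hc0 : c ≠ 0 := by
    intro h
    rw [h, zero_smul] at hc
    exact hp0 (reverse_eq_zero.mp hc)
  have hppr : p ∣ p.reverse := by
    rw [hc, smul_eq_C_mul]
    exact Dvd.intro_left _ rfl
  have hcu : IsUnit (C c : Polynomial ℚ) := isUnit_C.mpr (isUnit_iff_ne_zero.mpr hc0)
  -- p divides the RHS
  have hpRHS : p ∣ X ^ k * (Q * F * F.reverse) := heq ▸ ((hpR.mul_right G).mul_right G.reverse)
  have hpQFF : p ∣ Q * F * F.reverse := (hp.dvd_mul.mp hpRHS).resolve_left hpX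
  by_contra hpQ
  -- then p divides F
  have hpF : p ∣ F := by
    rcases hp.dvd_mul.mp hpQFF with h | h
    · rcases hp.dvd_mul.mp h with h' | h'
      · exact absurd h' hpQ
      · exact h'
    · exact hppr.trans (rev_dvd hF h)
  -- and p divides F.reverse
  have hpFrev : p ∣ F.reverse := by
    obtain ⟨S, hS⟩ := hpF
    rw [hS, reverse_mul_of_domain]
    exact hppr.mul_right _
  -- p does not divide G
  have hpG : ¬ p ∣ G := fun h => hp.not_unit (hFG.isUnit_of_dvd' hpF h)
  have hpGrev : ¬ p ∣ G.reverse := by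
    intro h
    have h1 : p.reverse ∣ G := rev_dvd hG h
    rw [hc, smul_eq_C_mul] at h1
    exact hpG (dvd_trans (Dvd.intro_left _ rfl) h1)
  -- p^2 divides the LHS
  have hp2 : p * p ∣ R * (G * G.reverse) := by
    have h1 : p * p ∣ F * F.reverse := mul_dvd_mul hpF hpFrev
    have h2 : F * F.reverse ∣ Q * F * F.reverse := by
      rw [mul_assoc]; exact dvd_mul_left _ _
    have h3 : p * p ∣ X ^ k * (Q * F * F.reverse) := (h1.trans h2).mul_left _
    rw [← heq, mul_assoc] at h3
    exact h3
  have hp2' : p ^ 2 ∣ R * (G * G.reverse) := by rw [pow_two]; exact hp2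
  have hpGG : ¬ p ∣ G * G.reverse := fun h =>
    (hp.dvd_mul.mp h).elim hpG hpGrev
  have hfinal : p ^ 2 ∣ R := hp.pow_dvd_of_dvd_mul_right 2 hpGG hp2'
  exact hp.not_unit (hsq p (pow_two p ▸ hfinal))
end
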